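/- Let (g,B) and (g',B') be Rota-Baxter Lie algebras of weight -1 and f: g → g' a Lie algebra homomorphism with f∘B = B'∘f. Then the restrictions f₊: im B → im B' and f₋: im B̃ → im B̃' form a homomorphism of the induced matched pairs of Lie algebras, i.e., f₊(u▶x) = f₋(u)▶'f₊(x) and f₋(x▷u) = f₊(x)▷'f₋(u). -/

import Mathlib

/-- a homomorphism `f` of Rota-Baxter Lie algebras of weight `-1`
restricts to a homomorphism of the induced matched pairs, i.e. (expressed on
representatives, with `B̃ = id - B`, actions `B̃(x)▶B(y) = B([B̃ x, y])` and
`B(x)▷B̃(y) = B̃([B x, y])`): `f₊(u ▶ x) = f₋(u) ▶' f₊(x)` and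
`f₋(x ▷ u) = f₊(x) ▷' f₋(u)`. -/
theorem stmt8 {K : Type*} [Field K] {g : Type*} [LieRing g] [LieAlgebra K g]
    {g' : Type*} [LieRing g'] [LieAlgebra K g']
    (B : g →ₗ[K] g) (B' : g' →ₗ[K] g')
    (hB : ∀ x y : g, ⁅B x, B y⁆ = B (⁅B x, y⁆ + ⁅x, B y⁆ - ⁅x, y⁆))
    (hB' : ∀ x y : g', ⁅B' x, B' y⁆ = B' (⁅B' x, y⁆ + ⁅x, B' y⁆ - ⁅x, y⁆))
    (f : g →ₗ⁅K⁆ g') (hf : ∀ x : g, f (B x) = B' (f x)) :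
    (∀ x y : g,
      f (B ⁅((LinearMap.id : g →ₗ[K] g) - B) x, y⁆) =
        B' ⁅((LinearMap.id : g' →ₗ[K] g') - B') (f x), f y⁆) ∧
    (∀ x y : g,
      f (((LinearMap.id : g →ₗ[K] g) - B) ⁅B x, y⁆) =
        ((LinearMap.id : g' →ₗ[K] g') - B') ⁅B' (f x), f y⁆) := by
  constructor
  · intro x y
    rw [hf]
    simp [LieHom.map_lie, hf]
  · intro x y
    simp only [LinearMap.sub_apply, LinearMap.id_apply]
    rw [map_sub, hf, f.map_lie, hf]
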